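/- Let S = diag[s₁,s₂,s₃] ≠ 0 with s₁ ≥ s₂ ≥ |s₃| ≥ 0, and let σ ∈ ℝ satisfy max{ (2s₁+s₂−s₃−1)/(2s₁+s₂−s₃+1), (s₁−s₃)/(s₁+s₂) } < σ < 1 and σ ≥ 0. For each (i,j,k) ∈ 𝓘 define x_i ∈ ℝ by: x_i = σ + (1−σ)(log c(S) − s_i)/(s_j+s_k) if s_j+s_k ≥ 1, and x_i = (σ + (1−σ)(log c(S) − s_i) + 1/2)(s_j+s_k) − 1/2 if 0 ≤ s_j+s_k < 1. Then −1 < x_i < 1, so that there exists a unique θ_i ∈ (0,π) with cos θ_i = x_i; in particular, −2s₁ − s₂ + s₃ < log c(S) − s_i < s_j + s_k for every (i,j,k) ∈ 𝓘. -/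

import Mathlib

open MeasureTheory Matrix Real

noncomputable section

/-- The space of real 3×3 matrices. -/
abbrev M3 : Type := Matrix (Fin 3) (Fin 3) ℝ

instance : MeasurableSpace M3 := inferInstanceAs (MeasurableSpace (Fin 3 → Fin 3 → ℝ))

/-- The special orthogonal group SO(3), as a set of real 3×3 matrices. -/
def SO3 : Set M3 := {R | Rᵀ * R = 1 ∧ R.det = 1}

/-- The normalizing constant of the matrix Fisher distribution,
`c(F) = ∫_{SO(3)} exp(tr(Fᵀ R)) dR`. -/
noncomputable def mfC (μ : Measure M3) (F : M3) : ℝ :=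
  ∫ R, Real.exp (Fᵀ * R).trace ∂μ

/-- The cosine of the sigma-point rotation angle in the unscented transform:
`xᵢ = σ + (1−σ)(log c(S) − sᵢ)/(sⱼ+sₖ)` if `sⱼ+sₖ ≥ 1`, and
`xᵢ = (σ + (1−σ)(log c(S) − sᵢ) + 1/2)(sⱼ+sₖ) − 1/2` if `0 ≤ sⱼ+sₖ < 1`. -/
noncomputable def sigmaCos (σ logc si sj sk : ℝ) : ℝ :=
  if 1 ≤ sj + sk then σ + (1 - σ) * (logc - si) / (sj + sk)
  else (σ + (1 - σ) * (logc - si) + 1 / 2) * (sj + sk) - 1 / 2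

/- column norms -/
lemma so3_col (R : M3) (h : Rᵀ * R = 1) (b : Fin 3) :
    R 0 b * R 0 b + R 1 b * R 1 b + R 2 b * R 2 b = 1 := by
  have := congrFun (congrFun h b) b
  simpa [Matrix.mul_apply, Fin.sum_univ_three, Matrix.one_apply] using this

lemma so3_abs_le (R : M3) (hR : R ∈ SO3) (a b : Fin 3) : |R a b| ≤ 1 := by
  have h := so3_col R hR.1 b
  have h0 : R 0 b * R 0 b ≤ 1 := by nlinarith [mul_self_nonneg (R 1 b), mul_self_nonneg (R 2 b)]
  have h1 : R 1 b * R 1 b ≤ 1 := by nlinarith [mul_self_nonneg (R 0 b), mul_self_nonneg (R 2 b)]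
  have h2 : R 2 b * R 2 b ≤ 1 := by nlinarith [mul_self_nonneg (R 0 b), mul_self_nonneg (R 1 b)]
  have key : ∀ x : ℝ, x * x ≤ 1 → |x| ≤ 1 := by
    intro x hx
    rw [abs_le]
    constructor <;> nlinarith [sq_nonneg (x - 1), sq_nonneg (x + 1)]
  fin_cases a
  · exact key _ h0
  · exact key _ h1
  · exact key _ h2

lemma so3_adj (R : M3) (hR : R ∈ SO3) : R.adjugate = Rᵀ := by
  have h3 : R * R.adjugate = 1 := by rw [Matrix.mul_adjugate, hR.2, one_smul]
  calc R.adjugate = 1 * R.adjugate := (one_mul _).symm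
    _ = (Rᵀ * R) * R.adjugate := by rw [hR.1]
    _ = Rᵀ * (R * R.adjugate) := by rw [Matrix.mul_assoc]
    _ = Rᵀ := by rw [h3, mul_one]

lemma so3_key (R : M3) (hR : R ∈ SO3) : R 0 0 + R 1 1 - R 2 2 ≤ 1 := by
  have hadj := so3_adj R hR
  rw [Matrix.adjugate_fin_three] at hadj
  have ha : R 1 1 * R 2 2 - R 1 2 * R 2 1 = R 0 0 := by
    have := congrFun (congrFun hadj 0) 0; simpa using this
  have he : R 0 0 * R 2 2 - R 0 2 * R 2 0 = R 1 1 := by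
    have := congrFun (congrFun hadj 1) 1; simpa using this
  have hi : R 0 0 * R 1 1 - R 0 1 * R 1 0 = R 2 2 := by
    have := congrFun (congrFun hadj 2) 2; simpa using this
  have c1 := so3_col R hR.1 0
  have c2 := so3_col R hR.1 1
  have c3 := so3_col R hR.1 2
  have key : 4 * (1 - R 0 0 - R 1 1 + R 2 2) =
      (R 1 0 - R 0 1)^2 + (R 0 2 + R 2 0)^2 + (R 1 2 + R 2 1)^2
        + (1 - R 0 0 - R 1 1 + R 2 2)^2 := by
    linear_combination (-1 : ℝ) * c1 - c2 - c3 + 2*ha + 2*he - 2*hi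
  nlinarith [sq_nonneg (R 1 0 - R 0 1), sq_nonneg (R 0 2 + R 2 0),
    sq_nonneg (R 1 2 + R 2 1), sq_nonneg (1 - R 0 0 - R 1 1 + R 2 2)]

lemma so3_weighted (s₁ s₂ s₃ : ℝ) (h12 : s₂ ≤ s₁) (h23a : -s₂ ≤ s₃) (h23b : s₃ ≤ s₂)
    (hs2 : 0 ≤ s₂) (R : M3) (hR : R ∈ SO3) :
    s₁ * R 0 0 + s₂ * R 1 1 + s₃ * R 2 2 ≤ s₁ + s₂ + s₃ := by
  have h00 : R 0 0 ≤ 1 := (abs_le.mp (so3_abs_le R hR 0 0)).2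
  have h11 : R 1 1 ≤ 1 := (abs_le.mp (so3_abs_le R hR 1 1)).2
  have h22 := abs_le.mp (so3_abs_le R hR 2 2)
  have hkey := so3_key R hR
  rcases le_or_gt 0 s₃ with h | h
  · nlinarith [mul_nonneg (by linarith : (0:ℝ) ≤ s₁) (by linarith : (0:ℝ) ≤ 1 - R 0 0),
      mul_nonneg hs2 (by linarith : (0:ℝ) ≤ 1 - R 1 1),
      mul_nonneg h (by linarith [h22.2] : (0:ℝ) ≤ 1 - R 2 2)]
  · nlinarith [mul_nonneg (by linarith : (0:ℝ) ≤ s₁ + s₃) (by linarith : (0:ℝ) ≤ 1 - R 0 0),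
      mul_nonneg (by linarith : (0:ℝ) ≤ s₂ + s₃) (by linarith : (0:ℝ) ≤ 1 - R 1 1),
      mul_nonneg (by linarith : (0:ℝ) ≤ -s₃)
        (by linarith : (0:ℝ) ≤ 1 - (R 0 0 + R 1 1 - R 2 2))]

/-- existence and uniqueness of the angle -/
lemma exists_unique_theta (x : ℝ) (h1 : -1 < x) (h2 : x < 1) :
    ∃! t : ℝ, t ∈ Set.Ioo (0 : ℝ) Real.pi ∧ Real.cos t = x := by
  have hlt : Real.arccos x < Real.pi := by
    refine lt_of_le_of_ne (Real.arccos_le_pi x) fun h => ?_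
    have := Real.arccos_eq_pi.mp h
    linarith
  refine ⟨Real.arccos x, ⟨⟨Real.arccos_pos.mpr h2, hlt⟩, Real.cos_arccos h1.le h2.le⟩, ?_⟩
  rintro t ⟨⟨ht0, htp⟩, hc⟩
  have hcos : Real.cos t = Real.cos (Real.arccos x) := by
    rw [hc, Real.cos_arccos h1.le h2.le]
  exact Real.injOn_cos ⟨ht0.le, htp.le⟩ ⟨Real.arccos_nonneg x, Real.arccos_le_pi x⟩ hcos

/-- the pure algebra: bounds on sigmaCos -/
lemma sigmaCos_bounds (σ L si sj sk A : ℝ) (hσ0 : 0 ≤ σ) (hσ1 : σ < 1)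
    (hA0 : 0 < A) (hsiA : si < A) (hσA : (A - 1) / (A + 1) < σ)
    (hjk : 0 ≤ sj + sk) (hL0 : 0 ≤ L) (hLlt : L < si + sj + sk) :
    -1 < sigmaCos σ L si sj sk ∧ sigmaCos σ L si sj sk < 1 := by
  have hA1 : (0:ℝ) < A + 1 := by linarith
  have hcross : (1 - σ) * A < 1 + σ := by
    rw [div_lt_iff₀ hA1] at hσA; nlinarith
  have hd1 : L - si < sj + sk := by linarith
  have hd2 : -A < L - si := by linarith
  have h1σ : (0:ℝ) < 1 - σ := by linarith
  unfold sigmaCos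
  split_ifs with h
  · have hS' : (0:ℝ) < sj + sk := by linarith
    constructor
    · have hlow : -(1 + σ) < (1 - σ) * (L - si) / (sj + sk) := by
        rw [lt_div_iff₀ hS']
        nlinarith [mul_lt_mul_of_pos_left hd2 h1σ,
          mul_le_mul_of_nonneg_left h (by linarith : (0:ℝ) ≤ 1 + σ)]
      linarith
    · have hup : (1 - σ) * (L - si) / (sj + sk) < 1 - σ := by
        rw [div_lt_iff₀ hS']
        nlinarith [mul_lt_mul_of_pos_left hd1 h1σ]
      linarith
  · push_neg at h
    have hb1 : -1 < σ + (1 - σ) * (L - si) := by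
      nlinarith [mul_lt_mul_of_pos_left hd2 h1σ]
    have hb2 : σ + (1 - σ) * (L - si) < 1 := by
      nlinarith [mul_lt_mul_of_pos_left hd1 h1σ]
    constructor
    · nlinarith [mul_nonneg (by linarith : (0:ℝ) ≤ σ + (1 - σ) * (L - si) + 1) hjk]
    · nlinarith [mul_nonneg (by linarith : (0:ℝ) ≤ 1 - (σ + (1 - σ) * (L - si))) hjk]

/-- Let `S = diag[s₁,s₂,s₃] ≠ 0` with `s₁ ≥ s₂ ≥ |s₃| ≥ 0`,
and let `σ` satisfy
`max{(2s₁+s₂−s₃−1)/(2s₁+s₂−s₃+1), (s₁−s₃)/(s₁+s₂)} < σ < 1` with `σ ≥ 0`.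
Then for each cyclic shift `(sᵢ,sⱼ,sₖ)` of `(s₁,s₂,s₃)`, the quantity `xᵢ`
defined in `sigmaCos` satisfies `−1 < xᵢ < 1`, so there exists a unique
`θᵢ ∈ (0,π)` with `cos θᵢ = xᵢ`; in particular,
`−2s₁ − s₂ + s₃ < log c(S) − sᵢ < sⱼ + sₖ`. -/
theorem matrixFisher_sigmaPoint_angle_wellDefined
    (μ : Measure M3) [IsProbabilityMeasure μ] (hsupp : μ SO3ᶜ = 0)
    (hleft : ∀ Q ∈ SO3, μ.map (fun R => Q * R) = μ)
    (hright : ∀ Q ∈ SO3, μ.map (fun R => R * Q) = μ)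
    (s₁ s₂ s₃ : ℝ) (h12 : s₁ ≥ s₂) (h23 : s₂ ≥ |s₃|)
    (hS : Matrix.diagonal ![s₁, s₂, s₃] ≠ 0)
    (σ : ℝ) (hσ0 : 0 ≤ σ)
    (hσmax : max ((2 * s₁ + s₂ - s₃ - 1) / (2 * s₁ + s₂ - s₃ + 1))
        ((s₁ - s₃) / (s₁ + s₂)) < σ)
    (hσ1 : σ < 1) :
    ∀ si sj sk : ℝ,
      (si, sj, sk) ∈ ({(s₁, s₂, s₃), (s₂, s₃, s₁), (s₃, s₁, s₂)} : Set (ℝ × ℝ × ℝ)) →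
      (-1 < sigmaCos σ (Real.log (mfC μ (Matrix.diagonal ![s₁, s₂, s₃]))) si sj sk ∧
        sigmaCos σ (Real.log (mfC μ (Matrix.diagonal ![s₁, s₂, s₃]))) si sj sk < 1) ∧
      (∃! t : ℝ, t ∈ Set.Ioo (0 : ℝ) Real.pi ∧
        Real.cos t =
          sigmaCos σ (Real.log (mfC μ (Matrix.diagonal ![s₁, s₂, s₃]))) si sj sk) ∧
      (-2 * s₁ - s₂ + s₃ <
          Real.log (mfC μ (Matrix.diagonal ![s₁, s₂, s₃])) - si ∧
        Real.log (mfC μ (Matrix.diagonal ![s₁, s₂, s₃])) - si < sj + sk) := by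
  -- basic sign facts
  have h23' := abs_le.mp h23
  have hs2 : 0 ≤ s₂ := (abs_nonneg s₃).trans h23
  have hs1 : 0 < s₁ := by
    rcases lt_or_ge 0 s₁ with h | h
    · exact h
    · exfalso
      have hs1' : s₁ = 0 := le_antisymm h (hs2.trans h12)
      have hs2' : s₂ = 0 := le_antisymm (by linarith) hs2
      have hs3' : s₃ = 0 := by
        have : |s₃| = 0 := le_antisymm (by linarith [h23]) (abs_nonneg s₃)
        exact abs_eq_zero.mp this
      apply hS
      rw [hs1', hs2', hs3']
      have : (![(0:ℝ), 0, 0]) = (0 : Fin 3 → ℝ) := by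
        funext i; fin_cases i <;> rfl
      rw [this]
      ext i j
      simp [Matrix.diagonal]
  -- the trace formula
  set S : M3 := Matrix.diagonal ![s₁, s₂, s₃] with hSdef
  have htr : ∀ R : M3, (Sᵀ * R).trace = s₁ * R 0 0 + s₂ * R 1 1 + s₃ * R 2 2 := by
    intro R
    rw [hSdef, Matrix.diagonal_transpose]
    simp [Matrix.trace, Matrix.diag, Matrix.diagonal_mul, Fin.sum_univ_three]
  -- measurability of entries
  have meas_ab : ∀ a b : Fin 3, Measurable fun R : M3 => R a b := fun a b =>
    (measurable_pi_apply b).comp (measurable_pi_apply a)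
  -- a.e. membership
  have hae : ∀ᵐ R ∂μ, R ∈ SO3 := by
    rw [MeasureTheory.ae_iff]
    exact hsupp
  -- integrability of entries
  have hint_ab : ∀ a b : Fin 3, Integrable (fun R : M3 => R a b) μ := by
    intro a b
    refine Integrable.mono' (integrable_const 1) (meas_ab a b).aestronglyMeasurable ?_
    filter_upwards [hae] with R hR
    rw [Real.norm_eq_abs]
    exact so3_abs_le R hR a b
  -- diagonal entry integrals vanish
  have hdiag : ∀ (q : Fin 3 → ℝ), Matrix.diagonal q ∈ SO3 →
      ∀ a b : Fin 3, ∫ R, R a b ∂μ = q a * ∫ R, R a b ∂μ := by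
    intro q hq a b
    have hm : Measurable (fun R : M3 => Matrix.diagonal q * R) := by
      apply measurable_pi_lambda
      intro i
      apply measurable_pi_lambda
      intro j
      simp only [Matrix.mul_apply]
      exact Finset.measurable_sum _ fun c _ => ((meas_ab c j).const_mul _)
    conv_lhs => rw [← hleft _ hq]
    rw [MeasureTheory.integral_map hm.aemeasurable (meas_ab a b).aestronglyMeasurable]
    simp only [Matrix.diagonal_mul]
    rw [MeasureTheory.integral_const_mul]
  have hQ1 : Matrix.diagonal ![(-1:ℝ), -1, 1] ∈ SO3 := by
    constructor
    · rw [Matrix.diagonal_transpose, Matrix.diagonal_mul_diagonal]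
      have : (fun i => (![(-1:ℝ), -1, 1]) i * (![(-1:ℝ), -1, 1]) i) = fun _ => (1:ℝ) := by
        funext i; fin_cases i <;> norm_num
      rw [this, Matrix.diagonal_one]
    · rw [Matrix.det_diagonal, Fin.prod_univ_three]
      norm_num [Matrix.cons_val_two, Matrix.tail_cons, Matrix.head_cons]
  have hQ2 : Matrix.diagonal ![(1:ℝ), -1, -1] ∈ SO3 := by
    constructor
    · rw [Matrix.diagonal_transpose, Matrix.diagonal_mul_diagonal]
      have : (fun i => (![(1:ℝ), -1, -1]) i * (![(1:ℝ), -1, -1]) i) = fun _ => (1:ℝ) := by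
        funext i; fin_cases i <;> norm_num
      rw [this, Matrix.diagonal_one]
    · rw [Matrix.det_diagonal, Fin.prod_univ_three]
      norm_num [Matrix.cons_val_two, Matrix.tail_cons, Matrix.head_cons]
  have hI0 : ∫ R, R 0 0 ∂μ = 0 := by
    have := hdiag _ hQ1 0 0
    simp only [Matrix.cons_val_zero] at this
    linarith
  have hI1 : ∫ R, R 1 1 ∂μ = 0 := by
    have := hdiag _ hQ1 1 1
    simp only [Matrix.cons_val_one, Matrix.head_cons, Matrix.cons_val_zero] at this
    linarith
  have hI2 : ∫ R, R 2 2 ∂μ = 0 := by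
    have := hdiag _ hQ2 2 2
    simp only [Matrix.cons_val_two, Matrix.tail_cons, Matrix.head_cons] at this
    linarith
  -- integral of f is 0
  set f : M3 → ℝ := fun R => s₁ * R 0 0 + s₂ * R 1 1 + s₃ * R 2 2 with hfdef
  have hA : Integrable (fun R : M3 => s₁ * R 0 0) μ := (hint_ab 0 0).const_mul s₁
  have hB : Integrable (fun R : M3 => s₂ * R 1 1) μ := (hint_ab 1 1).const_mul s₂
  have hC : Integrable (fun R : M3 => s₃ * R 2 2) μ := (hint_ab 2 2).const_mul s₃
  have hAB : Integrable (fun R : M3 => s₁ * R 0 0 + s₂ * R 1 1) μ := hA.add hB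
  have hintf : Integrable f μ := hAB.add hC
  have hf0 : ∫ R, f R ∂μ = 0 := by
    rw [hfdef]
    rw [MeasureTheory.integral_add hAB hC, MeasureTheory.integral_add hA hB,
      MeasureTheory.integral_const_mul, MeasureTheory.integral_const_mul,
      MeasureTheory.integral_const_mul, hI0, hI1, hI2]
    ring
  -- measurability of f, exp f
  have hmf : Measurable f := by
    apply Measurable.add
    apply Measurable.add
    · exact (meas_ab 0 0).const_mul s₁
    · exact (meas_ab 1 1).const_mul s₂
    · exact (meas_ab 2 2).const_mul s₃
  -- bound on f
  set T : ℝ := s₁ + s₂ + s₃ with hTdef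
  have hTpos : 0 < T := by rw [hTdef]; linarith [h23'.1]
  have hfle : ∀ R ∈ SO3, f R ≤ T :=
    fun R hR => so3_weighted s₁ s₂ s₃ h12 h23'.1 h23'.2 hs2 R hR
  have hintexp : Integrable (fun R => Real.exp (f R)) μ := by
    refine Integrable.mono' (integrable_const (Real.exp T))
      (Real.measurable_exp.comp hmf).aestronglyMeasurable ?_
    filter_upwards [hae] with R hR
    rw [Real.norm_eq_abs, abs_of_pos (Real.exp_pos _)]
    exact Real.exp_le_exp.mpr (hfle R hR)
  -- mfC equals integral of exp f
  have hmfC : mfC μ S = ∫ R, Real.exp (f R) ∂μ := by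
    rw [mfC]
    congr 1
    funext R
    rw [htr R]
  -- c >= 1
  have hc1 : 1 ≤ mfC μ S := by
    rw [hmfC]
    have h1f : ∫ R, (1 + f R) ∂μ = 1 := by
      rw [MeasureTheory.integral_add (integrable_const 1) hintf, hf0]
      simp
    calc (1:ℝ) = ∫ R, (1 + f R) ∂μ := h1f.symm
      _ ≤ ∫ R, Real.exp (f R) ∂μ := by
          refine MeasureTheory.integral_mono ((integrable_const 1).add hintf) hintexp ?_
          intro R
          have := Real.add_one_le_exp (f R)
          simp only
          linarith
  -- c < exp T
  have hclt : mfC μ S < Real.exp T := by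
    rw [hmfC]
    set g : M3 → ℝ := fun R => Real.exp T - Real.exp (f R) with hgdef
    have hintg : Integrable g μ := (integrable_const _).sub hintexp
    have hg0 : 0 ≤ᵐ[μ] g := by
      filter_upwards [hae] with R hR
      simp only [hgdef, Pi.zero_apply, sub_nonneg]
      exact Real.exp_le_exp.mpr (hfle R hR)
    have hne : ¬ g =ᵐ[μ] 0 := by
      intro hcontra
      have hfT : f =ᵐ[μ] fun _ => T := by
        filter_upwards [hcontra] with R hR
        simp only [hgdef, Pi.zero_apply] at hR
        have hexp : Real.exp (f R) = Real.exp T := by linarith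
        exact Real.exp_eq_exp.mp hexp
      have : ∫ R, f R ∂μ = T := by
        rw [MeasureTheory.integral_congr_ae hfT]
        simp
      rw [hf0] at this
      linarith
    have hpos : 0 < ∫ R, g R ∂μ := by
      rcases (MeasureTheory.integral_nonneg_of_ae hg0).lt_or_eq with h | h
      · exact h
      · exfalso
        exact hne ((MeasureTheory.integral_eq_zero_iff_of_nonneg_ae hg0 hintg).mp h.symm)
    have : ∫ R, g R ∂μ = Real.exp T - ∫ R, Real.exp (f R) ∂μ := by
      rw [hgdef, MeasureTheory.integral_sub (integrable_const _) hintexp]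
      simp
    linarith
  -- log bounds
  set L : ℝ := Real.log (mfC μ S) with hLdef
  have hL0 : 0 ≤ L := Real.log_nonneg hc1
  have hLT : L < T := by
    have hcpos : 0 < mfC μ S := lt_of_lt_of_le one_pos hc1
    calc L < Real.log (Real.exp T) := Real.log_lt_log hcpos hclt
      _ = T := Real.log_exp T
  -- sigma condition
  have hσA : (2 * s₁ + s₂ - s₃ - 1) / (2 * s₁ + s₂ - s₃ + 1) < σ :=
    lt_of_le_of_lt (le_max_left _ _) hσmax
  have hA0 : (0:ℝ) < 2 * s₁ + s₂ - s₃ := by linarith [h23'.2]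
  -- main
  intro si sj sk hmem
  simp only [Set.mem_insert_iff, Set.mem_singleton_iff, Prod.mk.injEq] at hmem
  have hfacts : si ≤ s₁ ∧ si + sj + sk = T ∧ 0 ≤ sj + sk := by
    rcases hmem with ⟨rfl, rfl, rfl⟩ | ⟨rfl, rfl, rfl⟩ | ⟨rfl, rfl, rfl⟩
    · exact ⟨le_refl _, by rw [hTdef], by linarith [h23'.1]⟩
    · exact ⟨h12, by rw [hTdef]; ring, by linarith [h23'.1]⟩
    · exact ⟨by linarith [h23'.2], by rw [hTdef]; ring, by linarith⟩
  obtain ⟨hsile, hsum, hjk⟩ := hfacts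
  have hsiA : si < 2 * s₁ + s₂ - s₃ := by linarith [h23'.2]
  have hbounds := sigmaCos_bounds σ L si sj sk (2 * s₁ + s₂ - s₃) hσ0 hσ1 hA0 hsiA hσA
    hjk hL0 (by linarith)
  refine ⟨hbounds, exists_unique_theta _ hbounds.1 hbounds.2, ?_, by linarith⟩
  linarith

end
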